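/- Let H ∈ ℝ^{n×n} be symmetric, g ∈ ℝⁿ, and M > 0, and let z* be a global minimizer over ℝⁿ of v_u(z) = ⟨g, z⟩ + (1/2)⟨Hz, z⟩ + (M/6)‖z‖³. Then the matrix H + (M/2)‖z*‖ I is positive semidefinite. -/

import Mathlib

open scoped BigOperators

section Statement9Aux

open scoped RealInnerProductSpace

/-- dot product helper -/
private def dpx {n : ℕ} (x y : Fin n → ℝ) : ℝ := ∑ i, x i * y i

/-- quadratic form helper -/
private def qBx {n : ℕ} (H : Matrix (Fin n) (Fin n) ℝ) (x y : Fin n → ℝ) : ℝ :=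
  ∑ i, ∑ j, x i * H i j * y j

private lemma dpx_self {n : ℕ} (x : EuclideanSpace ℝ (Fin n)) : dpx x x = ‖x‖ ^ 2 := by
  rw [EuclideanSpace.norm_eq, Real.sq_sqrt (Finset.sum_nonneg fun i _ => sq_nonneg _)]
  simp only [dpx, Real.norm_eq_abs, sq_abs]
  exact Finset.sum_congr rfl fun i _ => (sq _).symm

private lemma dpx_comm {n : ℕ} (x y : Fin n → ℝ) : dpx x y = dpx y x :=
  Finset.sum_congr rfl fun i _ => mul_comm _ _

private lemma dpx_expand {n : ℕ} (x y : EuclideanSpace ℝ (Fin n)) (t : ℝ) :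
    dpx (x + t • y : EuclideanSpace ℝ (Fin n)) (x + t • y : EuclideanSpace ℝ (Fin n)) = dpx x x + 2*t*dpx x y + t^2 * dpx y y := by
  simp only [dpx, WithLp.ofLp_add, WithLp.ofLp_smul, Pi.add_apply, Pi.smul_apply, smul_eq_mul]
  rw [Finset.sum_congr rfl (fun i _ => by ring :
    ∀ i ∈ Finset.univ, (x i + t*y i)*(x i + t*y i)
      = x i * x i + 2*t*(x i * y i) + t^2*(y i * y i))]
  rw [Finset.sum_add_distrib, Finset.sum_add_distrib, ← Finset.mul_sum, ← Finset.mul_sum]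

private lemma dpx_add_smul {n : ℕ} (g x y : EuclideanSpace ℝ (Fin n)) (t : ℝ) :
    dpx g (x + t • y : EuclideanSpace ℝ (Fin n)) = dpx g x + t * dpx g y := by
  simp only [dpx, WithLp.ofLp_add, WithLp.ofLp_smul, Pi.add_apply, Pi.smul_apply, smul_eq_mul]
  rw [Finset.sum_congr rfl (fun i _ => by ring :
    ∀ i ∈ Finset.univ, g i * (x i + t * y i) = g i * x i + t * (g i * y i))]
  rw [Finset.sum_add_distrib, ← Finset.mul_sum]

private lemma qBx_symm {n : ℕ} {H : Matrix (Fin n) (Fin n) ℝ} (hs : ∀ i j, H j i = H i j)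
    (x y : Fin n → ℝ) : qBx H x y = qBx H y x := by
  rw [qBx, Finset.sum_comm]
  refine Finset.sum_congr rfl fun j _ => Finset.sum_congr rfl fun i _ => ?_
  rw [hs i j]; ring

private lemma qBx_expand {n : ℕ} (H : Matrix (Fin n) (Fin n) ℝ)
    (x y : EuclideanSpace ℝ (Fin n)) (t : ℝ) :
    qBx H (x + t • y : EuclideanSpace ℝ (Fin n)) (x + t • y : EuclideanSpace ℝ (Fin n))
      = qBx H x x + t*(qBx H x y + qBx H y x) + t^2 * qBx H y y := by
  simp only [qBx, WithLp.ofLp_add, WithLp.ofLp_smul, Pi.add_apply, Pi.smul_apply, smul_eq_mul]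
  rw [Finset.sum_congr rfl (fun i _ => Finset.sum_congr rfl (fun j _ => by ring :
    ∀ j ∈ Finset.univ, (x i + t*y i)*H i j*(x j + t*y j)
      = x i * H i j * x j + t*(x i * H i j * y j + y i * H i j * x j)
        + t^2*(y i * H i j * y j)) : ∀ i ∈ Finset.univ, _ = _)]
  simp only [Finset.sum_add_distrib, ← Finset.mul_sum]

private lemma dpx_smul {n : ℕ} (x : EuclideanSpace ℝ (Fin n)) (t : ℝ) :
    dpx (t • x : EuclideanSpace ℝ (Fin n)) (t • x : EuclideanSpace ℝ (Fin n)) = t^2 * dpx x x := by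
  simp only [dpx, WithLp.ofLp_smul, Pi.smul_apply, smul_eq_mul, Finset.mul_sum]
  exact Finset.sum_congr rfl fun i _ => by ring

private lemma qBx_smul {n : ℕ} (H : Matrix (Fin n) (Fin n) ℝ)
    (x : EuclideanSpace ℝ (Fin n)) (t : ℝ) :
    qBx H (t • x : EuclideanSpace ℝ (Fin n)) (t • x : EuclideanSpace ℝ (Fin n)) = t^2 * qBx H x x := by
  simp only [qBx, WithLp.ofLp_smul, Pi.smul_apply, smul_eq_mul, Finset.mul_sum]
  exact Finset.sum_congr rfl fun i _ => Finset.sum_congr rfl fun j _ => by ring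

private lemma limit_aux0 (Q C : ℝ) (hC : 0 ≤ C)
    (h : ∀ t : ℝ, 0 < t → 0 ≤ t^2*Q + t^3*C) : 0 ≤ Q := by
  by_contra hneg
  push_neg at hneg
  have hden : 0 < C + 1 := by linarith
  have htpos : 0 < (-Q) / (C + 1) := div_pos (by linarith) hden
  have h1 := h ((-Q) / (C + 1)) htpos
  have h2 : ((-Q) / (C + 1)) * (C + 1) = -Q := by field_simp
  nlinarith [h1, h2, htpos, mul_pos htpos htpos, mul_pos (mul_pos htpos htpos) htpos]

private lemma limit_aux (Qw Bc Qz : ℝ) (hQz : 0 ≤ Qz)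
    (h : ∀ ε : ℝ, ε ≠ 0 → 0 ≤ Qw + 2*ε*Bc + ε^2*Qz) : 0 ≤ Qw := by
  by_contra hneg
  push_neg at hneg
  have hfrac : 0 < (-Qw) / (2 * (Qz + 1)) := div_pos (by linarith) (by linarith)
  set ε : ℝ := Real.sqrt ((-Qw) / (2 * (Qz + 1))) with hεd
  have hεpos : 0 < ε := Real.sqrt_pos.mpr hfrac
  have hεsq : ε^2 = (-Qw) / (2 * (Qz + 1)) := Real.sq_sqrt (le_of_lt hfrac)
  have h1 := h ε (ne_of_gt hεpos)
  have h2 := h (-ε) (by simpa using (ne_of_gt hεpos))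
  have hsum : 0 ≤ 2*Qw + 2*(ε^2*Qz) := by nlinarith [h1, h2]
  have hεQz : ε^2 * (2*(Qz + 1)) = -Qw := by
    rw [hεsq]; field_simp
  nlinarith [hsum, hεQz, hQz, hεsq, sq_nonneg ε]

private lemma pow_three_eq_rpow (r : ℝ) (hr : 0 ≤ r) : r ^ 3 = (r ^ 2) ^ (3/2 : ℝ) := by
  rw [← Real.rpow_natCast r 2, ← Real.rpow_mul hr, ← Real.rpow_natCast r 3]
  norm_num

private lemma rpow_half_sq (r : ℝ) (hr : 0 ≤ r) : (r ^ 2) ^ (1/2 : ℝ) = r := by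
  rw [← Real.rpow_natCast r 2, ← Real.rpow_mul hr]
  norm_num

private lemma deriv_model (C0 C1 C2 C3 c0 b0 a0 : ℝ) :
    HasDerivAt (fun t : ℝ => C0 + C1*t + C2*t^2 + C3*((c0 + b0*t + a0*t^2) ^ (3/2:ℝ)))
      (C1 + C3*(b0*(3/2)*c0 ^ (1/2:ℝ))) 0 := by
  have hpoly : HasDerivAt (fun t : ℝ => C0 + C1*t + C2*t^2) C1 0 := by
    have h1 : HasDerivAt (fun t : ℝ => C0 + C1*t) C1 0 := by
      simpa using ((hasDerivAt_id (0:ℝ)).const_mul C1).const_add C0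
    have h2 : HasDerivAt (fun t : ℝ => C2*t^2) 0 0 := by
      simpa using (hasDerivAt_pow 2 (0:ℝ)).const_mul C2
    have := h1.add h2
    rw [add_zero] at this
    exact this
  have hq : HasDerivAt (fun t : ℝ => c0 + b0*t + a0*t^2) b0 0 := by
    have h1 : HasDerivAt (fun t : ℝ => c0 + b0*t) b0 0 := by
      simpa using ((hasDerivAt_id (0:ℝ)).const_mul b0).const_add c0
    have h2 : HasDerivAt (fun t : ℝ => a0*t^2) 0 0 := by
      simpa using (hasDerivAt_pow 2 (0:ℝ)).const_mul a0
    have := h1.add h2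
    rw [add_zero] at this
    exact this
  have hr := (hq.rpow_const (p := 3/2) (Or.inr (by norm_num))).const_mul C3
  have := hpoly.add hr
  exact this.congr_deriv (by norm_num)

end Statement9Aux

/-- Let `H ∈ ℝ^{n×n}` be symmetric, `g ∈ ℝⁿ`, `M > 0`, and let `z*` be a global
minimizer over `ℝⁿ` of `v_u(z) = ⟨g,z⟩ + (1/2)⟨Hz,z⟩ + (M/6)‖z‖³`.  Then the matrix
`H + (M/2)‖z*‖ I` is positive semidefinite. -/
theorem statement9 {n : ℕ} (H : Matrix (Fin n) (Fin n) ℝ) (hH : H.IsSymm)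
    (g : EuclideanSpace ℝ (Fin n)) (M : ℝ) (hM : 0 < M)
    (zstar : EuclideanSpace ℝ (Fin n))
    (hmin : ∀ z : EuclideanSpace ℝ (Fin n),
      (∑ i, g i * zstar i) + (1 / 2) * (∑ i, ∑ j, zstar i * H i j * zstar j) +
          (M / 6) * ‖zstar‖ ^ 3 ≤
        (∑ i, g i * z i) + (1 / 2) * (∑ i, ∑ j, z i * H i j * z j) + (M / 6) * ‖z‖ ^ 3) :
    (H + ((M / 2) * ‖zstar‖) • (1 : Matrix (Fin n) (Fin n) ℝ)).PosSemidef := by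
  classical
  have hs : ∀ i j, H j i = H i j := fun i j => hH.apply i j
  set K : ℝ := (M / 2) * ‖zstar‖ with hK
  have hmin' : ∀ z : EuclideanSpace ℝ (Fin n),
      dpx g zstar + (1 / 2) * qBx H zstar zstar + (M / 6) * ‖zstar‖ ^ 3 ≤
        dpx g z + (1 / 2) * qBx H z z + (M / 6) * ‖z‖ ^ 3 := fun z => hmin z
  -- First-order condition
  have foc : ∀ w : EuclideanSpace ℝ (Fin n),
      dpx g w + qBx H zstar w + K * dpx zstar w = 0 := by
    intro w
    set C0 : ℝ := dpx g zstar + (1/2) * qBx H zstar zstar with hC0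
    set C1 : ℝ := dpx g w + (1/2)*(qBx H zstar w + qBx H w zstar) with hC1
    set C2 : ℝ := (1/2) * qBx H w w with hC2
    set f : ℝ → ℝ := fun t =>
      C0 + C1*t + C2*t^2
        + (M/6)*((‖zstar‖^2 + (2*dpx zstar w)*t + ‖w‖^2*t^2) ^ (3/2:ℝ)) with hf
    have hfeq : ∀ t : ℝ, f t = dpx g (zstar + t • w : EuclideanSpace ℝ (Fin n))
        + (1 / 2) * qBx H (zstar + t • w : EuclideanSpace ℝ (Fin n)) (zstar + t • w : EuclideanSpace ℝ (Fin n)) + (M / 6) * ‖zstar + t • w‖ ^ 3 := by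
      intro t
      have hbase : ‖zstar‖^2 + (2*dpx zstar w)*t + ‖w‖^2*t^2
          = ‖zstar + t • w‖ ^ 2 := by
        rw [← dpx_self, ← dpx_self, ← dpx_self, dpx_expand]; ring
      rw [hf, dpx_add_smul, qBx_expand, pow_three_eq_rpow _ (norm_nonneg _), ← hbase,
        hC0, hC1, hC2]
      ring
    have hlocmin : IsLocalMin f 0 := by
      apply Filter.Eventually.of_forall
      intro t
      rw [hfeq t, hfeq 0]
      have h0 : zstar + (0:ℝ) • w = zstar := by simp
      rw [h0]
      exact hmin' (zstar + t • w)
    have hder : HasDerivAt f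
        (C1 + (M/6)*((2*dpx zstar w)*(3/2)*(‖zstar‖^2) ^ (1/2:ℝ))) 0 :=
      deriv_model C0 C1 C2 (M/6) (‖zstar‖^2) (2*dpx zstar w) (‖w‖^2)
    have hzero := hlocmin.hasDerivAt_eq_zero hder
    rw [rpow_half_sq _ (norm_nonneg _), hC1, qBx_symm hs w zstar] at hzero
    rw [hK]
    linarith [hzero]
  -- inequality on the sphere ‖zstar + d‖ = ‖zstar‖
  have sphere : ∀ d : EuclideanSpace ℝ (Fin n), ‖zstar + d‖ = ‖zstar‖ →
      0 ≤ qBx H d d + K * dpx d d := by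
    intro d hd
    have h1s : zstar + d = zstar + (1:ℝ) • d := by simp
    have hd2 : dpx zstar d = -(1/2) * dpx d d := by
      have h2 : dpx (zstar + (1:ℝ) • d : EuclideanSpace ℝ (Fin n)) (zstar + (1:ℝ) • d : EuclideanSpace ℝ (Fin n)) = dpx zstar zstar := by
        rw [dpx_self, dpx_self, ← h1s, hd]
      rw [dpx_expand] at h2
      linarith [h2]
    have h1 := hmin' (zstar + d)
    rw [h1s, dpx_add_smul, qBx_expand, ← h1s, hd] at h1
    have hfoc := foc d
    rw [hd2] at hfoc
    have hsym := qBx_symm hs zstar d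
    nlinarith [h1, hfoc, hsym]
  -- the main nonnegativity statement
  have main1 : ∀ w : EuclideanSpace ℝ (Fin n), dpx zstar w ≠ 0 →
      0 ≤ qBx H w w + K * dpx w w := by
    intro w hw
    have hww : 0 < dpx w w := by
      rcases lt_or_eq_of_le (by positivity : (0:ℝ) ≤ ‖w‖^2) with h | h
      · rw [dpx_self]; exact h
      · exfalso
        have : w = 0 := by
          have := norm_eq_zero.mp (by nlinarith [norm_nonneg w] : ‖w‖ = 0)
          exact this
        apply hw; rw [this]; simp [dpx]
    set t : ℝ := -2 * dpx zstar w / dpx w w with ht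
    have htne : t ≠ 0 := by
      rw [ht]; exact div_ne_zero (by simpa using hw) (ne_of_gt hww)
    have hnorm : ‖zstar + t • w‖ = ‖zstar + t • w‖ := rfl
    have hsph : ‖zstar + t • w‖ = ‖zstar‖ := by
      have hsq : ‖zstar + t • w‖ ^ 2 = ‖zstar‖ ^ 2 := by
        rw [← dpx_self, ← dpx_self, dpx_expand]
        have h3 : t * dpx w w = -2 * dpx zstar w := by
          rw [ht]; field_simp
        linear_combination t * h3
      calc ‖zstar + t • w‖ = Real.sqrt (‖zstar + t • w‖ ^ 2) :=
            (Real.sqrt_sq (norm_nonneg _)).symm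
        _ = Real.sqrt (‖zstar‖ ^ 2) := by rw [hsq]
        _ = ‖zstar‖ := Real.sqrt_sq (norm_nonneg _)
    have := sphere (t • w) hsph
    rw [qBx_smul, dpx_smul] at this
    have ht2 : 0 < t^2 := by positivity
    nlinarith [this, ht2]
  have main : ∀ w : EuclideanSpace ℝ (Fin n), 0 ≤ qBx H w w + K * dpx w w := by
    intro w
    by_cases hw : dpx zstar w ≠ 0
    · exact main1 w hw
    push_neg at hw
    by_cases hz : zstar = 0
    · -- zstar = 0 case
      subst hz
      have hK0 : K = 0 := by rw [hK]; simp
      rw [hK0, zero_mul, add_zero]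
      have hg : ∀ u : EuclideanSpace ℝ (Fin n), dpx g u = 0 := by
        intro u
        have := foc u
        rw [hK0] at this
        have hq0 : qBx H (0 : EuclideanSpace ℝ (Fin n)) u = 0 := by
          simp [qBx]
        rw [hq0] at this
        linarith [this]
      apply limit_aux0 (qBx H w w) ((M/3) * ‖w‖^3) (by positivity)
      intro t htpos
      have h1 := hmin' (t • w)
      have hdp0 : dpx g (0 : EuclideanSpace ℝ (Fin n)) = 0 := by simp [dpx]
      have hqz : qBx H (0 : EuclideanSpace ℝ (Fin n)) (0 : EuclideanSpace ℝ (Fin n)) = 0 := by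
        simp [qBx]
      have hnz : ‖(0 : EuclideanSpace ℝ (Fin n))‖ = 0 := norm_zero
      have hnt : ‖t • w‖ = t * ‖w‖ := by
        rw [norm_smul, Real.norm_eq_abs, abs_of_pos htpos]
      rw [hdp0, hqz, hnz, qBx_smul, hg (t • w), hnt] at h1
      nlinarith [h1]
    · -- zstar ≠ 0, dpx zstar w = 0
      have hzn : 0 < dpx zstar zstar := by
        rw [dpx_self]
        have : ‖zstar‖ ≠ 0 := fun h => hz (norm_eq_zero.mp h)
        positivity
      have hQz : 0 ≤ qBx H zstar zstar + K * dpx zstar zstar := by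
        have hsph : ‖zstar + (-2:ℝ) • zstar‖ = ‖zstar‖ := by
          have : zstar + (-2:ℝ) • zstar = (-1:ℝ) • zstar := by
            rw [← sub_eq_zero]; module
          rw [this, norm_smul]; simp
        have := sphere ((-2:ℝ) • zstar) hsph
        rw [qBx_smul, dpx_smul] at this
        nlinarith [this]
      -- perturbation argument
      have hpert : ∀ ε : ℝ, ε ≠ 0 →
          0 ≤ (qBx H w w + K * dpx w w) + 2*ε*(qBx H w zstar + K * dpx w zstar)
            + ε^2 * (qBx H zstar zstar + K * dpx zstar zstar) := by
        intro ε hε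
        have hne : dpx zstar (w + ε • zstar : EuclideanSpace ℝ (Fin n)) ≠ 0 := by
          rw [dpx_add_smul, hw, zero_add]
          exact mul_ne_zero hε (ne_of_gt hzn)
        have h0 := main1 (w + ε • zstar) hne
        rw [qBx_expand, dpx_expand, qBx_symm hs zstar w] at h0
        nlinarith [h0]
      exact limit_aux _ _ _ hQz hpert
  -- conclude positive semidefiniteness
  rw [Matrix.posSemidef_iff_dotProduct_mulVec]
  constructor
  · rw [Matrix.IsHermitian, Matrix.conjTranspose_eq_transpose_of_trivial]
    exact hH.add (Matrix.isSymm_one.smul K)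
  · intro x
    have hx := main (WithLp.toLp 2 x)
    have e1 : dotProduct (star x) (Matrix.mulVec (H + K • (1 : Matrix (Fin n) (Fin n) ℝ)) x)
        = qBx H x x + K * dpx x x := by
      simp only [star_trivial, Matrix.add_mulVec, Matrix.smul_mulVec,
        Matrix.one_mulVec, dotProduct_add, dotProduct_smul, smul_eq_mul]
      congr 1
      simp [dotProduct, Matrix.mulVec, qBx, Finset.mul_sum, mul_assoc]
    rw [e1]
    exact hx
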